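/- F(c₁,…,c_K) = T − Σ_k E_k/(p_k*(c_k) + c_k) is increasing in each circuit power c_k, where p_k*(c_k) solves w_k·log₂(1+pγ_k) − w_k(p+c_k)γ_k/((1+pγ_k)ln 2) = D for a fixed constant D ≥ 0; indeed the map c ↦ p*(c) + c is increasing. -/

import Mathlib

open Real Set

lemma uloglemma (x : ℝ) (hx0 : 0 < x) :
    HasDerivAt (fun u : ℝ => u * Real.log u) (Real.log x + 1) x := by
  have h1 : HasDerivAt (fun u : ℝ => u * Real.log u) (1 * Real.log x + x * x⁻¹) x :=
    (hasDerivAt_id x).mul (Real.hasDerivAt_log hx0.ne')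
  convert h1 using 1
  field_simp

lemma f_strictMono (L : ℝ) :
    StrictMonoOn (fun u : ℝ => u * Real.log u - (L+1) * u) (Set.Ici (Real.exp L)) := by
  apply strictMonoOn_of_deriv_pos (convex_Ici _)
  · fun_prop
  · intro x hx
    rw [interior_Ici] at hx
    have hx0 : 0 < x := lt_trans (Real.exp_pos L) hx
    have hL : L < Real.log x := by
      nlinarith [Real.log_lt_log (Real.exp_pos L) hx, Real.log_exp L]
    have hd : HasDerivAt (fun u : ℝ => u * Real.log u - (L+1) * u)
        (Real.log x - L) x := by
      have h2 : HasDerivAt (fun u : ℝ => (L+1) * u) (L+1) x := by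
        simpa using (hasDerivAt_id x).const_mul (L+1)
      have := (uloglemma x hx0).sub h2
      exact this.congr_deriv (by ring)
    rw [hd.deriv]
    linarith

lemma g_strictMono (L : ℝ) :
    StrictMonoOn (fun u : ℝ => u * Real.log u - L * u) (Set.Ici (Real.exp L)) := by
  apply strictMonoOn_of_deriv_pos (convex_Ici _)
  · fun_prop
  · intro x hx
    rw [interior_Ici] at hx
    have hx0 : 0 < x := lt_trans (Real.exp_pos L) hx
    have hL : L < Real.log x := by
      nlinarith [Real.log_lt_log (Real.exp_pos L) hx, Real.log_exp L]
    have hd : HasDerivAt (fun u : ℝ => u * Real.log u - L * u)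
        (Real.log x + 1 - L) x := by
      have h2 : HasDerivAt (fun u : ℝ => L * u) L x := by
        simpa using (hasDerivAt_id x).const_mul L
      exact (uloglemma x hx0).sub h2
    rw [hd.deriv]
    linarith

lemma key_mono (L u u' s s' : ℝ) (hu0 : 0 < u) (hu'0 : 0 < u')
    (hu : L < Real.log u) (hu' : L < Real.log u')
    (hs : s = u * Real.log u - (L+1) * u + 1)
    (hs' : s' = u' * Real.log u' - (L+1) * u' + 1)
    (hss : s < s') : u + s < u' + s' := by
  have hue : Real.exp L < u := by
    calc Real.exp L < Real.exp (Real.log u) := Real.exp_lt_exp.mpr hu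
    _ = u := Real.exp_log hu0
  have hue' : Real.exp L < u' := by
    calc Real.exp L < Real.exp (Real.log u') := Real.exp_lt_exp.mpr hu'
    _ = u' := Real.exp_log hu'0
  have huu' : u < u' := by
    by_contra h
    push_neg at h
    rcases eq_or_lt_of_le h with h | h
    · rw [h] at hs'; linarith
    · have := f_strictMono L (le_of_lt hue') (le_of_lt hue) h
      simp only at this
      linarith
  have := g_strictMono L (le_of_lt hue) (le_of_lt hue') huu'
  simp only at this
  nlinarith

theorem F_increasing_in_circuit_power (K : ℕ) (w γ E : Fin K → ℝ)
    (hw : ∀ k, 0 < w k) (hγ : ∀ k, 0 < γ k) (hE : ∀ k, 0 ≤ E k)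
    (T D : ℝ) (hD : 0 ≤ D)
    (pstar : Fin K → ℝ → ℝ)
    (hpstar : ∀ k c, 0 < c → 0 ≤ pstar k c ∧
      w k * Real.logb 2 (1 + pstar k c * γ k)
        - w k * (pstar k c + c) * γ k / ((1 + pstar k c * γ k) * Real.log 2) = D)
    (c c' : Fin K → ℝ) (hc : ∀ k, 0 < c k) (hcc' : ∀ k, c k ≤ c' k) :
    (∀ k, c k < c' k → pstar k (c k) + c k < pstar k (c' k) + c' k) ∧
    T - ∑ k, E k / (pstar k (c k) + c k) ≤ T - ∑ k, E k / (pstar k (c' k) + c' k) := by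
  have h2 : (0:ℝ) < Real.log 2 := Real.log_pos (by norm_num)
  have main : ∀ k, c k < c' k → pstar k (c k) + c k < pstar k (c' k) + c' k := by
    intro k hk
    obtain ⟨hp0, heq⟩ := hpstar k (c k) (hc k)
    have hc'k : 0 < c' k := (hc k).trans hk
    obtain ⟨hp'0, heq'⟩ := hpstar k (c' k) hc'k
    set p := pstar k (c k)
    set p' := pstar k (c' k)
    have hγk := hγ k
    have hwk := hw k
    set L := D * Real.log 2 / w k with hL
    set u := 1 + p * γ k with hudef
    set u' := 1 + p' * γ k with hu'def
    have hu0 : 0 < u := by nlinarith [mul_nonneg hp0 hγk.le]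
    have hu'0 : 0 < u' := by nlinarith [mul_nonneg hp'0 hγk.le]
    rw [Real.logb] at heq heq'
    have hL' : L * w k = D * Real.log 2 := by
      rw [hL]; exact div_mul_cancel₀ _ hwk.ne'
    have hm : u * Real.log u * w k = D * Real.log 2 * u + (p + c k) * γ k * w k := by
      have hm2 : (u * Real.log u * w k) * Real.log 2
          = (D * Real.log 2 * u + (p + c k) * γ k * w k) * Real.log 2 := by
        field_simp at heq
        linear_combination (Real.log 2) * heq
      exact mul_right_cancel₀ h2.ne' hm2
    have hm' : u' * Real.log u' * w k = D * Real.log 2 * u' + (p' + c' k) * γ k * w k := by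
      have hm2 : (u' * Real.log u' * w k) * Real.log 2
          = (D * Real.log 2 * u' + (p' + c' k) * γ k * w k) * Real.log 2 := by
        field_simp at heq'
        linear_combination (Real.log 2) * heq'
      exact mul_right_cancel₀ h2.ne' hm2
    have hdiff : (Real.log u - L) * (w k * u) = (p + c k) * γ k * w k := by
      linear_combination hm - u * hL'
    have hdiff' : (Real.log u' - L) * (w k * u') = (p' + c' k) * γ k * w k := by
      linear_combination hm' - u' * hL'
    have hpc : 0 < p + c k := by linarith [hc k]
    have hpc' : 0 < p' + c' k := by linarith
    have hlogu : L < Real.log u := by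
      nlinarith [hdiff, mul_pos hwk hu0, mul_pos (mul_pos hpc hγk) hwk]
    have hlogu' : L < Real.log u' := by
      nlinarith [hdiff', mul_pos hwk hu'0, mul_pos (mul_pos hpc' hγk) hwk]
    have hs : c k * γ k = u * Real.log u - (L+1) * u + 1 := by
      have h3 : (c k * γ k) * w k = (u * Real.log u - (L+1) * u + 1) * w k := by
        linear_combination -hm + u * hL' + w k * hudef
      exact mul_right_cancel₀ hwk.ne' h3
    have hs' : c' k * γ k = u' * Real.log u' - (L+1) * u' + 1 := by
      have h3 : (c' k * γ k) * w k = (u' * Real.log u' - (L+1) * u' + 1) * w k := by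
        linear_combination -hm' + u' * hL' + w k * hu'def
      exact mul_right_cancel₀ hwk.ne' h3
    have hkey := key_mono L u u' (c k * γ k) (c' k * γ k) hu0 hu'0 hlogu hlogu' hs hs'
      (mul_lt_mul_of_pos_right hk hγk)
    have h4 : (p + c k) * γ k < (p' + c' k) * γ k := by
      rw [hudef, hu'def] at hkey
      ring_nf at hkey ⊢
      linarith
    exact lt_of_mul_lt_mul_right h4 hγk.le
  refine ⟨main, ?_⟩
  have hle : ∀ k, E k / (pstar k (c' k) + c' k) ≤ E k / (pstar k (c k) + c k) := by
    intro k
    have hc'k : 0 < c' k := lt_of_lt_of_le (hc k) (hcc' k)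
    have h1 : 0 < pstar k (c k) + c k := by
      have := (hpstar k (c k) (hc k)).1; linarith [hc k]
    have h2 : pstar k (c k) + c k ≤ pstar k (c' k) + c' k := by
      rcases eq_or_lt_of_le (hcc' k) with h | h
      · rw [← h]
      · exact (main k h).le
    gcongr
    exact hE k
  have hsum : ∑ k, E k / (pstar k (c' k) + c' k) ≤ ∑ k, E k / (pstar k (c k) + c k) :=
    Finset.sum_le_sum (fun k _ => hle k)
  linarith
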